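/- arXiv:math/0602440 — 3 statements merged into one kernel-verified Lean document; each statement's English description precedes it below -/
import Mathlib

section
/- For 0 < q < 1 and |x| < 1, the Euler formula holds: (x;q)_∞ = Σ_{n≥0} (-1)^n q^{n(n-1)/2} x^n / (q;q)_n, and in fact both sides are entire functions of x so the identity holds for all complex x. -/
set_option maxHeartbeats 800000


/-- Finite q-Pochhammer `(q;q)_n` as a complex number. -/
noncomputable def qqPochN (q : ℝ) (n : ℕ) : ℂ :=
  ∏ k ∈ Finset.range n, (1 - (q : ℂ) ^ (k + 1))

open Finset Filter Topology

namespace EulerAux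

/-- The coefficient `a_n = (-1)^n q^{n(n-1)/2} / (q;q)_n`. -/
noncomputable def a (q : ℝ) (n : ℕ) : ℂ :=
  (-1 : ℂ) ^ n * (q : ℂ) ^ (n * (n - 1) / 2) / qqPochN q n

variable {q : ℝ}

lemma factor_pos (hq0 : 0 < q) (hq1 : q < 1) (k : ℕ) : 0 < 1 - q ^ (k + 1) := by
  have : q ^ (k + 1) < 1 := pow_lt_one₀ hq0.le hq1 (Nat.succ_ne_zero k)
  linarith

lemma factor_ne (hq0 : 0 < q) (hq1 : q < 1) (k : ℕ) :
    (1 : ℂ) - (q : ℂ) ^ (k + 1) ≠ 0 := by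
  have h : ((1 - q ^ (k + 1) : ℝ) : ℂ) ≠ 0 := by
    exact_mod_cast (factor_pos hq0 hq1 k).ne'
  push_cast at h
  exact h

lemma poch_ne (hq0 : 0 < q) (hq1 : q < 1) (n : ℕ) : qqPochN q n ≠ 0 := by
  rw [qqPochN]
  exact Finset.prod_ne_zero_iff.mpr fun k _ => factor_ne hq0 hq1 k

lemma norm_factor (hq0 : 0 < q) (hq1 : q < 1) (k : ℕ) :
    ‖(1 : ℂ) - (q : ℂ) ^ (k + 1)‖ = 1 - q ^ (k + 1) := by
  have h : (1 : ℂ) - (q : ℂ) ^ (k + 1) = ((1 - q ^ (k + 1) : ℝ) : ℂ) := by push_cast; ring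
  rw [h, Complex.norm_real, Real.norm_eq_abs, abs_of_pos (factor_pos hq0 hq1 k)]

lemma Tsucc (n : ℕ) : (n + 1) * ((n + 1) - 1) / 2 = n * (n - 1) / 2 + n := by
  cases n with
  | zero => rfl
  | succ m =>
    have h1 : (m + 1 + 1) * ((m + 1 + 1) - 1) = (m + 1) * ((m + 1) - 1) + 2 * (m + 1) := by
      simp only [Nat.add_sub_cancel]
      ring
    rw [h1, Nat.add_mul_div_left _ _ (by norm_num : 0 < 2)]

lemma a_rec (hq0 : 0 < q) (hq1 : q < 1) (n : ℕ) :
    a q (n + 1) * (1 - (q : ℂ) ^ (n + 1)) = -((q : ℂ) ^ n) * a q n := by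
  have hp := poch_ne hq0 hq1 n
  have hf := factor_ne hq0 hq1 n
  have hps : qqPochN q (n + 1) = qqPochN q n * (1 - (q : ℂ) ^ (n + 1)) := by
    rw [qqPochN, qqPochN, Finset.prod_range_succ]
  rw [a, a, hps, Tsucc n, pow_add]
  field_simp
  ring

lemma a_div (hq0 : 0 < q) (hq1 : q < 1) (n : ℕ) :
    a q (n + 1) = -((q : ℂ) ^ n) * a q n / (1 - (q : ℂ) ^ (n + 1)) :=
  (eq_div_iff (factor_ne hq0 hq1 n)).mpr (a_rec hq0 hq1 n)

lemma summable_norm_aux (hq0 : 0 < q) (hq1 : q < 1) (x : ℂ) :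
    Summable (fun n => ‖a q n * x ^ n‖) := by
  have hq' : (0 : ℝ) < 1 - q := by linarith
  apply summable_of_ratio_norm_eventually_le (r := 1 / 2) (by norm_num)
  have h2 : Tendsto (fun n : ℕ => q ^ n * ‖x‖ / (1 - q)) atTop (𝓝 0) := by
    have := ((tendsto_pow_atTop_nhds_zero_of_lt_one hq0.le hq1).mul_const ‖x‖).div_const (1 - q)
    simpa using this
  filter_upwards [h2.eventually (gt_mem_nhds (by norm_num : (0 : ℝ) < 1 / 2))] with n hn
  have hf := factor_ne hq0 hq1 n
  have hkey : a q (n + 1) * x ^ (n + 1)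
      = (-((q : ℂ) ^ n) * x / (1 - (q : ℂ) ^ (n + 1))) * (a q n * x ^ n) := by
    rw [a_div hq0 hq1 n, pow_succ]
    field_simp
    ring
  have hnorm : ‖a q (n + 1) * x ^ (n + 1)‖
      = (q ^ n * ‖x‖ / (1 - q ^ (n + 1))) * ‖a q n * x ^ n‖ := by
    rw [hkey, norm_mul, norm_div, norm_mul, norm_neg, norm_pow, norm_factor hq0 hq1 n,
      Complex.norm_real, Real.norm_eq_abs, abs_of_pos hq0]
  rw [Real.norm_eq_abs, Real.norm_eq_abs, abs_of_nonneg (norm_nonneg _),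
    abs_of_nonneg (norm_nonneg _), hnorm]
  have hle : q ^ n * ‖x‖ / (1 - q ^ (n + 1)) ≤ q ^ n * ‖x‖ / (1 - q) := by
    apply div_le_div_of_nonneg_left (by positivity) hq'
    have : q ^ (n + 1) ≤ q := by
      calc q ^ (n + 1) ≤ q ^ 1 := pow_le_pow_of_le_one hq0.le hq1.le (by omega)
      _ = q := pow_one q
    linarith
  have : q ^ n * ‖x‖ / (1 - q ^ (n + 1)) ≤ 1 / 2 := le_trans hle hn.le
  exact mul_le_mul_of_nonneg_right this (norm_nonneg _)

lemma summable_aux (hq0 : 0 < q) (hq1 : q < 1) (x : ℂ) :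
    Summable (fun n => a q n * x ^ n) :=
  (summable_norm_aux hq0 hq1 x).of_norm

/-- The series `S(x) = Σ a_n x^n`. -/
noncomputable def S (q : ℝ) (x : ℂ) : ℂ := ∑' n, a q n * x ^ n

lemma hasSum_S (hq0 : 0 < q) (hq1 : q < 1) (x : ℂ) :
    HasSum (fun n => a q n * x ^ n) (S q x) :=
  (summable_aux hq0 hq1 x).hasSum

lemma hasSum_funceq (hq0 : 0 < q) (hq1 : q < 1) (x : ℂ) :
    HasSum (fun n => a q n * x ^ n) ((1 - x) * S q ((q : ℂ) * x)) := by
  have hA := hasSum_S hq0 hq1 ((q : ℂ) * x)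
  have hB : HasSum (fun n => x * (a q n * ((q : ℂ) * x) ^ n)) (x * S q ((q : ℂ) * x)) :=
    hA.mul_left x
  set f : ℕ → ℂ := fun m => if m = 0 then 0 else x * (a q (m - 1) * ((q : ℂ) * x) ^ (m - 1))
    with hfdef
  have hshift : HasSum f (x * S q ((q : ℂ) * x)) := by
    have hsum0 : ∑ i ∈ range 1, f i = 0 := by simp [hfdef]
    have h1 : HasSum (fun n : ℕ => f (n + 1)) (x * S q ((q : ℂ) * x) - ∑ i ∈ range 1, f i) := by
      rw [hsum0, sub_zero]
      have heq : (fun n : ℕ => f (n + 1)) = fun n => x * (a q n * ((q : ℂ) * x) ^ n) := by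
        funext n
        simp [hfdef]
      rw [heq]
      exact hB
    exact (hasSum_nat_add_iff' 1).mp h1
  have hC := hA.sub hshift
  have hco : (fun n => a q n * ((q : ℂ) * x) ^ n - f n) = fun n => a q n * x ^ n := by
    funext n
    cases n with
    | zero => simp [hfdef]
    | succ m =>
      simp only [hfdef, Nat.succ_ne_zero, if_false, Nat.add_sub_cancel]
      have hrec := a_rec hq0 hq1 m
      linear_combination (-(x ^ (m + 1))) * hrec
  rw [hco] at hC
  have : (1 - x) * S q ((q : ℂ) * x) = S q ((q : ℂ) * x) - x * S q ((q : ℂ) * x) := by ring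
  rw [this]
  exact hC

lemma funceq (hq0 : 0 < q) (hq1 : q < 1) (x : ℂ) :
    S q x = (1 - x) * S q ((q : ℂ) * x) :=
  (hasSum_S hq0 hq1 x).unique (hasSum_funceq hq0 hq1 x)

lemma iter (hq0 : 0 < q) (hq1 : q < 1) (x : ℂ) (N : ℕ) :
    S q x = (∏ k ∈ range N, (1 - x * (q : ℂ) ^ k)) * S q ((q : ℂ) ^ N * x) := by
  induction N with
  | zero => simp
  | succ n ih =>
    have h1 : (q : ℂ) * ((q : ℂ) ^ n * x) = (q : ℂ) ^ (n + 1) * x := by ring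
    rw [ih, funceq hq0 hq1 ((q : ℂ) ^ n * x), h1, prod_range_succ]
    ring

lemma a_zero (q : ℝ) : a q 0 = 1 := by simp [a, qqPochN]

lemma S_sub_one_bound (hq0 : 0 < q) (hq1 : q < 1) (x : ℂ) {y : ℂ} (hy : ‖y‖ ≤ ‖x‖) :
    ‖S q y - 1‖ ≤ ‖y‖ * ∑' (n : ℕ), ‖a q (n + 1) * ((‖x‖ + 1 : ℝ) : ℂ) ^ (n + 1)‖ := by
  set x' : ℂ := ((‖x‖ + 1 : ℝ) : ℂ) with hx'
  have hx'norm : ‖x'‖ = ‖x‖ + 1 := by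
    rw [hx', Complex.norm_real, Real.norm_eq_abs, abs_of_pos (by positivity)]
  have hs := hasSum_S hq0 hq1 y
  have hs1 : HasSum (fun n => a q (n + 1) * y ^ (n + 1)) (S q y - 1) := by
    have := (hasSum_nat_add_iff' 1).mpr hs
    simpa [a_zero] using this
  have hsum1 : Summable (fun n => ‖a q (n + 1) * y ^ (n + 1)‖) :=
    (summable_nat_add_iff 1).mpr (summable_norm_aux hq0 hq1 y)
  have hsum2 : Summable (fun n => ‖a q (n + 1) * x' ^ (n + 1)‖) :=
    (summable_nat_add_iff 1).mpr (summable_norm_aux hq0 hq1 x')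
  calc ‖S q y - 1‖ ≤ ∑' n, ‖a q (n + 1) * y ^ (n + 1)‖ := by
        rw [← hs1.tsum_eq]
        exact norm_tsum_le_tsum_norm hsum1
    _ ≤ ∑' n, ‖y‖ * ‖a q (n + 1) * x' ^ (n + 1)‖ := by
        apply Summable.tsum_le_tsum _ hsum1 (hsum2.mul_left ‖y‖)
        intro n
        rw [norm_mul, norm_mul, norm_pow, norm_pow, hx'norm]
        have h1 : ‖y‖ ^ (n + 1) ≤ ‖y‖ * (‖x‖ + 1) ^ n := by
          rw [pow_succ']
          apply mul_le_mul_of_nonneg_left _ (norm_nonneg y)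
          exact pow_le_pow_left₀ (norm_nonneg y) (by linarith) n
        have h2 : ‖y‖ * (‖x‖ + 1) ^ n ≤ ‖y‖ * (‖x‖ + 1) ^ (n + 1) := by
          apply mul_le_mul_of_nonneg_left _ (norm_nonneg y)
          apply pow_le_pow_right₀ (by linarith [norm_nonneg x]) (by omega)
        calc ‖a q (n + 1)‖ * ‖y‖ ^ (n + 1) ≤ ‖a q (n + 1)‖ * (‖y‖ * (‖x‖ + 1) ^ (n + 1)) := by
              apply mul_le_mul_of_nonneg_left (le_trans h1 h2) (norm_nonneg _)
          _ = ‖y‖ * (‖a q (n + 1)‖ * (‖x‖ + 1) ^ (n + 1)) := by ring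
    _ = ‖y‖ * ∑' n, ‖a q (n + 1) * x' ^ (n + 1)‖ := tsum_mul_left

lemma S_tendsto (hq0 : 0 < q) (hq1 : q < 1) (x : ℂ) :
    Tendsto (fun N : ℕ => S q ((q : ℂ) ^ N * x)) atTop (𝓝 1) := by
  set C := ∑' (n : ℕ), ‖a q (n + 1) * ((‖x‖ + 1 : ℝ) : ℂ) ^ (n + 1)‖ with hC
  have hqn : ∀ N : ℕ, ‖(q : ℂ) ^ N * x‖ = q ^ N * ‖x‖ := by
    intro N
    rw [norm_mul, norm_pow, Complex.norm_real, Real.norm_eq_abs, abs_of_pos hq0]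
  have hb : ∀ N : ℕ, ‖S q ((q : ℂ) ^ N * x) - 1‖ ≤ q ^ N * ‖x‖ * C := by
    intro N
    have hy : ‖(q : ℂ) ^ N * x‖ ≤ ‖x‖ := by
      rw [hqn N]
      have : q ^ N ≤ 1 := pow_le_one₀ hq0.le hq1.le
      nlinarith [norm_nonneg x]
    have := S_sub_one_bound hq0 hq1 x hy
    rwa [hqn N] at this
  have hzero : Tendsto (fun N : ℕ => q ^ N * ‖x‖ * C) atTop (𝓝 0) := by
    have := ((tendsto_pow_atTop_nhds_zero_of_lt_one hq0.le hq1).mul_const ‖x‖).mul_const C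
    simpa using this
  have hnorm : Tendsto (fun N : ℕ => ‖S q ((q : ℂ) ^ N * x) - 1‖) atTop (𝓝 0) :=
    squeeze_zero (fun N => norm_nonneg _) hb hzero
  rw [tendsto_iff_norm_sub_tendsto_zero]
  exact hnorm

lemma partialProd_tendsto (hq0 : 0 < q) (hq1 : q < 1) (x : ℂ) :
    Tendsto (fun N : ℕ => ∏ k ∈ range N, (1 - x * (q : ℂ) ^ k)) atTop (𝓝 (S q x)) := by
  have h1 := S_tendsto hq0 hq1 x
  have hev : ∀ᶠ N in atTop, S q ((q : ℂ) ^ N * x) ≠ 0 := h1.eventually_ne one_ne_zero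
  have h2 : Tendsto (fun N : ℕ => S q x * (S q ((q : ℂ) ^ N * x))⁻¹) atTop
      (𝓝 (S q x * (1 : ℂ)⁻¹)) := tendsto_const_nhds.mul (h1.inv₀ one_ne_zero)
  rw [inv_one, mul_one] at h2
  apply h2.congr'
  filter_upwards [hev] with N hN
  rw [iter hq0 hq1 x N]
  rw [mul_assoc, mul_inv_cancel₀ hN, mul_one]

end EulerAux

open EulerAux Finset Filter Topology

/-- Euler's formula: `(x;q)_∞ = Σ_{n≥0} (-1)^n q^{n(n-1)/2} x^n / (q;q)_n`
for every complex `x` (both sides are entire in `x`). -/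
theorem stmt5 (q : ℝ) (hq0 : 0 < q) (hq1 : q < 1) (x : ℂ) :
    HasSum
      (fun n : ℕ => (-1 : ℂ) ^ n * (q : ℂ) ^ (n * (n - 1) / 2) / qqPochN q n * x ^ n)
      (∏' k : ℕ, (1 - x * (q : ℂ) ^ k)) := by
  have hS : HasSum (fun n : ℕ => a q n * x ^ n) (S q x) := hasSum_S hq0 hq1 x
  have hpp := partialProd_tendsto hq0 hq1 x
  have key : (∏' k : ℕ, (1 - x * (q : ℂ) ^ k)) = S q x := by
    by_cases hz : ∀ k : ℕ, (1 : ℂ) - x * (q : ℂ) ^ k ≠ 0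
    · have hlog : Summable (fun n : ℕ => Complex.log (1 - x * (q : ℂ) ^ n)) := by
        apply Summable.of_norm_bounded_eventually_nat (g := fun n => 3 / 2 * (‖x‖ * q ^ n))
        · have : Summable (fun n : ℕ => q ^ n) := summable_geometric_of_lt_one hq0.le hq1
          simpa [mul_assoc] using (this.mul_left (3 / 2 * ‖x‖))
        · have htz : Tendsto (fun n : ℕ => ‖x‖ * q ^ n) atTop (𝓝 0) := by
            simpa using (tendsto_pow_atTop_nhds_zero_of_lt_one hq0.le hq1).const_mul ‖x‖
          filter_upwards [htz.eventually (gt_mem_nhds (by norm_num : (0:ℝ) < 1/2))] with n hn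
          · have hzn : ‖-(x * (q : ℂ) ^ n)‖ ≤ 1 / 2 := by
              rw [norm_neg, norm_mul, norm_pow, Complex.norm_real, Real.norm_eq_abs,
                abs_of_pos hq0]
              exact hn.le
            have := Complex.norm_log_one_add_half_le_self hzn
            rw [show (1 : ℂ) + -(x * (q : ℂ) ^ n) = 1 - x * (q : ℂ) ^ n by ring] at this
            calc ‖Complex.log (1 - x * (q : ℂ) ^ n)‖ ≤ 3 / 2 * ‖-(x * (q : ℂ) ^ n)‖ := this
              _ = 3 / 2 * (‖x‖ * q ^ n) := by
                  rw [norm_neg, norm_mul, norm_pow, Complex.norm_real, Real.norm_eq_abs,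
                    abs_of_pos hq0]
      · have hmult : Multipliable (fun k : ℕ => (1 : ℂ) - x * (q : ℂ) ^ k) :=
          Complex.multipliable_of_summable_log hlog
        exact tendsto_nhds_unique hmult.hasProd.tendsto_prod_nat hpp
    · push_neg at hz
      obtain ⟨k0, hk0⟩ := hz
      have hprod : HasProd (fun k : ℕ => (1 : ℂ) - x * (q : ℂ) ^ k) 0 := by
        rw [HasProd]
        have hev : ∀ᶠ s : Finset ℕ in atTop, ∏ i ∈ s, ((1 : ℂ) - x * (q : ℂ) ^ i) = 0 := by
          filter_upwards [eventually_ge_atTop ({k0} : Finset ℕ)] with s hs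
          exact Finset.prod_eq_zero (by simpa using hs) hk0
        exact tendsto_const_nhds.congr' (hev.mono fun s hs => hs.symm)
      have hS0 : S q x = 0 := by
        refine tendsto_nhds_unique hpp ?_
        have hev : ∀ᶠ N in atTop, ∏ k ∈ range N, ((1 : ℂ) - x * (q : ℂ) ^ k) = 0 := by
          filter_upwards [eventually_ge_atTop (k0 + 1)] with N hN
          exact Finset.prod_eq_zero (Finset.mem_range.mpr (by omega)) hk0
        exact tendsto_const_nhds.congr' (hev.mono fun s hs => hs.symm)
      rw [hprod.tprod_eq, hS0]
  rw [key]
  exact hS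
end

section
/- For 0 < q < 1, the sequence of functions x ↦ (q^{1-n} x^2; q)_∞, n = 0, 1, 2, ..., i.e., {(q λ_n^2 x^2; q)_∞} with λ_n = q^{-n/2} the positive zeros of (x^2;q)_∞, is complete in L^1 with respect to the Jackson q-measure on (0,1): if y is q-integrable on (0,1) and ∫_0^1 y(x)(q^{1-n} x^2;q)_∞ d_q x = 0 for all n ≥ 0, then y(q^m) = 0 for all m ≥ 0. -/
/-- Infinite q-Pochhammer `(a;q)_∞` as a real number. -/
noncomputable def qPochInf (a q : ℝ) : ℝ := ∏' k : ℕ, (1 - a * q ^ k)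

/-- Jackson q-integral on `(0,1)`. -/
noncomputable def qIntegral01 (q : ℝ) (f : ℝ → ℝ) : ℝ :=
  (1 - q) * ∑' n : ℕ, f (q ^ n) * q ^ n

namespace Stmt7Aux

open Finset

/-- `(q^(j+1); q)_∞`. -/
noncomputable def P (q : ℝ) (j : ℕ) : ℝ := qPochInf (q ^ (j + 1)) q

/-- `(q;q)_j`, the finite q-Pochhammer. -/
noncomputable def Qp (q : ℝ) (j : ℕ) : ℝ := ∏ k ∈ range j, (1 - q ^ (k + 1))

/-- Gaussian binomial coefficient (as a real polynomial value in q). -/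
noncomputable def Gb (q : ℝ) : ℕ → ℕ → ℝ
  | 0, 0 => 1
  | 0, _ + 1 => 0
  | p + 1, 0 => Gb q p 0
  | p + 1, k + 1 => Gb q p (k + 1) + q ^ (p - k) * Gb q p k

variable {q : ℝ}

lemma factor_pos (hq0 : 0 < q) (hq1 : q < 1) (j k : ℕ) :
    0 < 1 - q ^ (j + 1) * q ^ k := by
  have h : q ^ (j + 1) * q ^ k = q ^ (j + 1 + k) := by rw [← pow_add]
  have : q ^ (j + 1 + k) < 1 := pow_lt_one₀ hq0.le hq1 (by omega)
  nlinarith [this, h]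

lemma log_summable (hq0 : 0 < q) (hq1 : q < 1) (j : ℕ) :
    Summable fun k : ℕ => Real.log (1 - q ^ (j + 1) * q ^ k) := by
  have hbase : Summable fun k : ℕ => (q * (1 - q)⁻¹) * q ^ k :=
    (summable_geometric_of_lt_one hq0.le hq1).mul_left _
  refine (Summable.of_norm_bounded hbase fun k => ?_)
  set x := q ^ (j + 1) * q ^ k with hx
  have hx0 : 0 < x := by positivity
  have hxq : x ≤ q * q ^ k := by
    have : q ^ (j + 1) ≤ q ^ 1 := pow_le_pow_of_le_one hq0.le hq1.le (by omega)
    simpa [pow_one] using mul_le_mul_of_nonneg_right this (by positivity)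
  have hxlt : x < 1 := by
    have h1 : q * q ^ k < 1 := by
      have : q ^ k ≤ 1 := pow_le_one₀ hq0.le hq1.le
      nlinarith
    linarith
  have h1x : 0 < 1 - x := by linarith
  have hlog : Real.log (1 - x) ≤ 0 :=
    Real.log_nonpos (by linarith) (by linarith)
  rw [Real.norm_eq_abs, abs_of_nonpos hlog]
  have hle : -Real.log (1 - x) ≤ (1 - x)⁻¹ - 1 := by
    have := Real.log_le_sub_one_of_pos (inv_pos.mpr h1x)
    rwa [Real.log_inv] at this
  have h2 : (1 - x)⁻¹ - 1 = x * (1 - x)⁻¹ := by field_simp; ring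
  have h3 : x * (1 - x)⁻¹ ≤ (q * q ^ k) * (1 - q)⁻¹ := by
    apply mul_le_mul hxq _ (by positivity) (by positivity)
    have hk1 : q ^ k ≤ 1 := pow_le_one₀ hq0.le hq1.le
    exact inv_anti₀ (by linarith) (by nlinarith)
  calc -Real.log (1 - x) ≤ x * (1 - x)⁻¹ := by linarith
    _ ≤ (q * q ^ k) * (1 - q)⁻¹ := h3
    _ = (q * (1 - q)⁻¹) * q ^ k := by ring

lemma multP (hq0 : 0 < q) (hq1 : q < 1) (j : ℕ) :
    Multipliable fun k : ℕ => 1 - q ^ (j + 1) * q ^ k := by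
  exact Real.multipliable_of_summable_log
    (fun k => factor_pos hq0 hq1 j k) (log_summable hq0 hq1 j)

lemma P_rec (hq0 : 0 < q) (hq1 : q < 1) (j : ℕ) :
    P q j = (1 - q ^ (j + 1)) * P q (j + 1) := by
  have hsh : (fun k : ℕ => 1 - q ^ (j + 1) * q ^ (k + 1)) =
      fun k : ℕ => 1 - q ^ (j + 1 + 1) * q ^ k := by
    funext k; ring_nf
  have hmul : Multipliable fun k : ℕ => 1 - q ^ (j + 1) * q ^ (k + 1) := by
    rw [hsh]; exact multP hq0 hq1 (j + 1)
  have := tprod_eq_zero_mul' (f := fun k : ℕ => 1 - q ^ (j + 1) * q ^ k) hmul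
  simp only [pow_zero, mul_one] at this
  rw [P, qPochInf, this, hsh]
  rfl

/-- Weierstrass-type lower bound for finite products. -/
lemma finprod_lower (a : ℕ → ℝ) (h0 : ∀ k, 0 ≤ a k) (h1 : ∀ k, a k ≤ 1) (s : Finset ℕ) :
    1 - ∑ k ∈ s, a k ≤ ∏ k ∈ s, (1 - a k) := by
  induction s using Finset.cons_induction with
  | empty => simp
  | cons i s hi ih =>
    rw [Finset.prod_cons, Finset.sum_cons]
    have hs : ∏ k ∈ s, (1 - a k) ≤ 1 := by
      apply Finset.prod_le_one
      · intro k _; nlinarith [h0 k, h1 k]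
      · intro k _; nlinarith [h0 k]
    nlinarith [h0 i, h1 i, ih]

lemma P_le_one (hq0 : 0 < q) (hq1 : q < 1) (j : ℕ) : P q j ≤ 1 := by
  have hp := (multP hq0 hq1 j).hasProd
  refine le_of_tendsto' hp fun s => ?_
  apply Finset.prod_le_one
  · intro k _; exact (factor_pos hq0 hq1 j k).le
  · intro k _; nlinarith [pow_pos hq0 (j + 1), pow_pos hq0 k,
      mul_pos (pow_pos hq0 (j + 1)) (pow_pos hq0 k)]

lemma P_lower (hq0 : 0 < q) (hq1 : q < 1) (j : ℕ) :
    1 - q ^ (j + 1) * (1 - q)⁻¹ ≤ P q j := by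
  have hp := (multP hq0 hq1 j).hasProd
  have hsum : Summable fun k : ℕ => q ^ (j + 1) * q ^ k :=
    (summable_geometric_of_lt_one hq0.le hq1).mul_left _
  have htsum : ∑' k : ℕ, q ^ (j + 1) * q ^ k = q ^ (j + 1) * (1 - q)⁻¹ := by
    rw [tsum_mul_left, tsum_geometric_of_lt_one hq0.le hq1]
  refine ge_of_tendsto' hp fun s => ?_
  have h1 : ∑ k ∈ s, q ^ (j + 1) * q ^ k ≤ q ^ (j + 1) * (1 - q)⁻¹ := by
    rw [← htsum]
    exact Summable.sum_le_tsum s (fun k _ => by positivity) hsum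
  have h2 := finprod_lower (fun k => q ^ (j + 1) * q ^ k)
    (fun k => by positivity)
    (fun k => by have := factor_pos hq0 hq1 j k; show q ^ (j + 1) * q ^ k ≤ 1; nlinarith) s
  simp only at h2 ⊢
  linarith

lemma P_pos (hq0 : 0 < q) (hq1 : q < 1) (j : ℕ) : 0 < P q j := by
  have h1q : (0:ℝ) < 1 - q := by linarith
  obtain ⟨N, hN⟩ := exists_pow_lt_of_lt_one (mul_pos h1q h1q) hq1
  have hNpos : ∀ i : ℕ, N ≤ i → 0 < P q i := by
    intro i hi
    have h1 : q ^ (i + 1) ≤ q ^ N := pow_le_pow_of_le_one hq0.le hq1.le (by omega)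
    have h2 : q ^ (i + 1) * (1 - q)⁻¹ < 1 := by
      rw [← lt_div_iff₀ (by positivity), one_div, inv_inv] at *
      calc q ^ (i + 1) ≤ q ^ N := h1
        _ < (1 - q) * (1 - q) := hN
        _ ≤ 1 - q := by nlinarith
    have := P_lower hq0 hq1 i
    linarith
  have desc : ∀ d i : ℕ, 0 < P q (i + d) → 0 < P q i := by
    intro d
    induction d with
    | zero => intro i h; simpa using h
    | succ d ih =>
      intro i h
      have h' : 0 < P q (i + 1) := ih (i + 1) (by rwa [show i + 1 + d = i + (d + 1) by omega])
      rw [P_rec hq0 hq1 i]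
      have : q ^ (i + 1) < 1 := pow_lt_one₀ hq0.le hq1 (by omega)
      nlinarith
  exact desc N j (hNpos (j + N) (by omega))

lemma Qp_pos (hq0 : 0 < q) (hq1 : q < 1) (j : ℕ) : 0 < Qp q j := by
  refine Finset.prod_pos fun k _ => ?_
  have : q ^ (k + 1) < 1 := pow_lt_one₀ hq0.le hq1 (by omega)
  linarith

lemma Qp_P (hq0 : 0 < q) (hq1 : q < 1) (j : ℕ) : Qp q j * P q j = P q 0 := by
  induction j with
  | zero => simp [Qp]
  | succ j ih =>
    rw [Qp, Finset.prod_range_succ, ← Qp, mul_assoc, ← P_rec hq0 hq1 j, ih]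

lemma C_le_Qp (hq0 : 0 < q) (hq1 : q < 1) (j : ℕ) : P q 0 ≤ Qp q j := by
  have h := Qp_P hq0 hq1 j
  nlinarith [Qp_pos hq0 hq1 j, P_le_one hq0 hq1 j, P_pos hq0 hq1 j]

lemma Gb_zero_right (p : ℕ) : Gb q p 0 = 1 := by
  induction p with
  | zero => rfl
  | succ p ih => rw [Gb, ih]

lemma Gb_eq_zero (p k : ℕ) (h : p < k) : Gb q p k = 0 := by
  induction p generalizing k with
  | zero => match k, h with | k + 1, _ => rfl
  | succ p ih =>
    match k, h with
    | k + 1, h =>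
      rw [Gb, ih (k + 1) (by omega)]
      rcases Nat.lt_or_ge p k with h' | h'
      · rw [ih k h', mul_zero, add_zero]
      · have : k = p := by omega
        subst this
        simp at h

lemma Gb_diag (p : ℕ) : Gb q p p = 1 := by
  induction p with
  | zero => rfl
  | succ p ih =>
    rw [Gb, Gb_eq_zero p (p + 1) (by omega), ih, zero_add, Nat.sub_self, pow_zero, one_mul]

lemma Qp_succ (j : ℕ) : Qp q (j + 1) = Qp q j * (1 - q ^ (j + 1)) :=
  Finset.prod_range_succ _ j

lemma Gb_mul_Qp (hq0 : 0 < q) (hq1 : q < 1) :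
    ∀ p k, k ≤ p → Gb q p k * (Qp q k * Qp q (p - k)) = Qp q p := by
  intro p
  induction p with
  | zero =>
    intro k hk
    interval_cases k
    simp [Gb, Qp]
  | succ p ih =>
    intro k hk
    match k with
    | 0 => simp [Gb_zero_right, Qp]
    | k + 1 =>
      rcases Nat.eq_or_lt_of_le hk with h | h
      · rw [← h]
        simp [Gb_diag, Qp]
      · have hkp : k < p := by omega
        have e1 : Qp q (p + 1 - (k + 1)) = Qp q (p - (k + 1)) * (1 - q ^ (p - k)) := by
          have h2 : p + 1 - (k + 1) = (p - (k + 1)) + 1 := by omega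
          rw [h2, Qp_succ, show p - (k + 1) + 1 = p - k from by omega]
        have e2 : Qp q (k + 1) = Qp q k * (1 - q ^ (k + 1)) := Qp_succ k
        have e3 : Qp q (p + 1) = Qp q p * (1 - q ^ (p + 1)) := Qp_succ p
        have hpow : q ^ (p - k) * q ^ (k + 1) = q ^ (p + 1) := by
          rw [← pow_add]
          congr 1
          omega
        have IH1 := ih (k + 1) (by omega)
        have IH2 := ih k (by omega)
        rw [show Gb q (p + 1) (k + 1) = Gb q p (k + 1) + q ^ (p - k) * Gb q p k from rfl,
          e1, e2, e3]
        rw [e2] at IH1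
        rw [show Qp q (p - k) = Qp q (p - (k + 1)) * (1 - q ^ (p - k)) by
          rw [← e1]; congr 1; omega] at IH2
        linear_combination (1 - q ^ (p - k)) * IH1 + q ^ (p - k) * (1 - q ^ (k + 1)) * IH2 -
          Qp q p * hpow

/-- The alternating sum `S p`. -/
noncomputable def S (q : ℝ) (p : ℕ) : ℝ :=
  ∑ k ∈ range (p + 1), (-1) ^ k * q ^ k.choose 2 * Gb q p k

lemma S_rec (p : ℕ) : S q (p + 1) = (1 - q ^ p) * S q p := by
  classical
  set g : ℕ → ℝ := fun k => (-1) ^ k * q ^ k.choose 2 * Gb q p k with hg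
  have hSp : S q p = ∑ k ∈ range (p + 1), g k := rfl
  have hpeel : S q (p + 1)
      = (∑ k ∈ range (p + 1), (-1 : ℝ) ^ (k + 1) * q ^ ((k + 1).choose 2) * Gb q (p + 1) (k + 1))
        + (-1 : ℝ) ^ 0 * q ^ (Nat.choose 0 2) * Gb q (p + 1) 0 :=
    Finset.sum_range_succ' _ (p + 1)
  have hterm : ∀ k ∈ range (p + 1),
      (-1 : ℝ) ^ (k + 1) * q ^ ((k + 1).choose 2) * Gb q (p + 1) (k + 1)
        = g (k + 1) + (-(q ^ p)) * g k := by
    intro k hk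
    have hkp : k ≤ p := by
      have := Finset.mem_range.mp hk; omega
    have hch : (k + 1).choose 2 = k.choose 2 + k := by
      rw [Nat.choose_succ_succ, Nat.choose_one_right, Nat.add_comm]
    have hpow : q ^ (k.choose 2 + k) * q ^ (p - k) = q ^ p * q ^ k.choose 2 := by
      rw [← pow_add, ← pow_add]
      congr 1
      omega
    rw [show Gb q (p + 1) (k + 1) = Gb q p (k + 1) + q ^ (p - k) * Gb q p k from rfl, hg]
    simp only []
    rw [hch]
    rw [pow_succ (-1 : ℝ) k]
    linear_combination (-(-1 : ℝ) ^ k * Gb q p k) * hpow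
  rw [Finset.sum_congr rfl hterm, Finset.sum_add_distrib] at hpeel
  have hg0 : g 0 = 1 := by simp [hg, Gb_zero_right]
  have hgp1 : g (p + 1) = 0 := by simp [hg, Gb_eq_zero p (p + 1) (by omega)]
  have hA : ∑ k ∈ range (p + 1), g (k + 1) = S q p + g (p + 1) - g 0 := by
    have h1 := Finset.sum_range_succ' g (p + 1)
    have h2 := Finset.sum_range_succ g (p + 1)
    rw [hSp]
    linarith [h1, h2]
  have hB : ∑ k ∈ range (p + 1), (-(q ^ p)) * g k = -(q ^ p) * S q p := by
    rw [← Finset.mul_sum, hSp]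
  rw [hA, hg0, hgp1, hB] at hpeel
  have hlast : (-1 : ℝ) ^ 0 * q ^ Nat.choose 0 2 * Gb q (p + 1) 0 = 1 := by
    simp [Gb_zero_right]
  rw [hlast] at hpeel
  rw [hpeel]
  ring

lemma S_eq_zero (p : ℕ) (hp : 1 ≤ p) : S q p = 0 := by
  induction p with
  | zero => omega
  | succ p ih =>
    rcases Nat.eq_zero_or_pos p with h | h
    · subst h
      rw [S_rec]
      simp [S, Gb]
    · rw [S_rec, ih h, mul_zero]

/-- `(q^i; q)_∞` for integer `i`, set to `0` for `i ≤ 0`. -/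
noncomputable def MyB (q : ℝ) (i : ℤ) : ℝ := if 0 < i then P q (i.toNat - 1) else 0

lemma MyB_nonpos (i : ℤ) (hi : i ≤ 0) : MyB q i = 0 := if_neg (by omega)

lemma MyB_nat (j : ℕ) : MyB q ((j : ℤ) + 1) = P q j := by
  rw [MyB, if_pos (by omega), show (((j : ℤ) + 1).toNat - 1) = j from by omega]

lemma MyB_nonneg (hq0 : 0 < q) (hq1 : q < 1) (i : ℤ) : 0 ≤ MyB q i := by
  rw [MyB]
  split
  · exact (P_pos hq0 hq1 _).le
  · exact le_rfl

lemma MyB_le_one (hq0 : 0 < q) (hq1 : q < 1) (i : ℤ) : MyB q i ≤ 1 := by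
  rw [MyB]
  split
  · exact P_le_one hq0 hq1 _
  · norm_num

lemma qPoch_eq_MyB (hq0 : 0 < q) (hq1 : q < 1) (i : ℤ) :
    qPochInf (q ^ i) q = MyB q i := by
  rcases lt_or_ge 0 i with hi | hi
  · obtain ⟨j, hj⟩ : ∃ j : ℕ, i = (j : ℤ) + 1 := ⟨(i - 1).toNat, by omega⟩
    subst hj
    rw [MyB_nat]
    rw [show ((j : ℤ) + 1) = ((j + 1 : ℕ) : ℤ) from by push_cast; ring, zpow_natCast]
    rfl
  · rw [MyB_nonpos i hi]
    set k₀ := (-i).toNat with hk₀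
    have hf : (1 : ℝ) - q ^ i * q ^ k₀ = 0 := by
      have h1 : (q : ℝ) ^ k₀ = q ^ ((k₀ : ℤ)) := (zpow_natCast q k₀).symm
      rw [h1, ← zpow_add₀ (ne_of_gt hq0), show i + (k₀ : ℤ) = 0 from by omega, zpow_zero]
      ring
    have hev : ∀ᶠ s : Finset ℕ in Filter.atTop,
        ∏ k ∈ s, (1 - q ^ i * q ^ k) = 0 := by
      filter_upwards [Filter.eventually_ge_atTop ({k₀} : Finset ℕ)] with s hs
      exact Finset.prod_eq_zero (hs (Finset.mem_singleton_self k₀)) hf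
    have hp : HasProd (fun k : ℕ => 1 - q ^ i * q ^ k) 0 :=
      Filter.Tendsto.congr' (hev.mono fun s h => h.symm) tendsto_const_nhds
    exact hp.tprod_eq

/-- The inverse coefficients `h_k`. -/
noncomputable def hcoef (q : ℝ) (k : ℕ) : ℝ :=
  (-1) ^ k * q ^ k.choose 2 / (Qp q k * P q 0)

lemma choose_two_bound (k : ℕ) : k ≤ k.choose 2 + 1 := by
  induction k with
  | zero => simp
  | succ k ih =>
    rw [Nat.choose_succ_succ, Nat.choose_one_right]
    omega

lemma hcoef_abs_le (hq0 : 0 < q) (hq1 : q < 1) (k : ℕ) :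
    |hcoef q k| ≤ (P q 0 * P q 0 * q)⁻¹ * q ^ k := by
  have hC : 0 < P q 0 := P_pos hq0 hq1 0
  have hQ : 0 < Qp q k := Qp_pos hq0 hq1 k
  have hCQ : P q 0 * P q 0 ≤ Qp q k * P q 0 :=
    mul_le_mul_of_nonneg_right (C_le_Qp hq0 hq1 k) hC.le
  have habs : |hcoef q k| = q ^ k.choose 2 / (Qp q k * P q 0) := by
    rw [hcoef, abs_div, abs_mul, abs_pow, abs_pow, abs_neg, abs_one, one_pow, one_mul,
      abs_of_pos hq0, abs_of_pos (mul_pos hQ hC)]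
  rw [habs]
  have h1 : q ^ k.choose 2 / (Qp q k * P q 0) ≤ q ^ k.choose 2 / (P q 0 * P q 0) :=
    div_le_div_of_nonneg_left (by positivity) (by positivity) hCQ
  have h2 : q ^ (k.choose 2 + 1) ≤ q ^ k := pow_le_pow_of_le_one hq0.le hq1.le (choose_two_bound k)
  have h3 : q ^ k.choose 2 * q ≤ q ^ k := by
    rw [← pow_succ]
    exact h2
  have h4 : (0:ℝ) < (P q 0 * P q 0)⁻¹ := by positivity
  have h5 : q ^ k.choose 2 ≤ q⁻¹ * q ^ k := by
    rw [← mul_le_mul_iff_right₀ hq0]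
    have hq : q * (q⁻¹ * q ^ k) = q ^ k := by field_simp
    rw [hq]
    nlinarith [h3]
  calc q ^ k.choose 2 / (Qp q k * P q 0) ≤ q ^ k.choose 2 / (P q 0 * P q 0) := h1
    _ = (P q 0 * P q 0)⁻¹ * q ^ k.choose 2 := by rw [div_eq_mul_inv, mul_comm]
    _ ≤ (P q 0 * P q 0)⁻¹ * (q⁻¹ * q ^ k) := mul_le_mul_of_nonneg_left h5 h4.le
    _ = (P q 0 * P q 0 * q)⁻¹ * q ^ k := by rw [mul_inv]; ring

lemma hcoef_summable (hq0 : 0 < q) (hq1 : q < 1) :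
    Summable fun k : ℕ => |hcoef q k| := by
  refine Summable.of_nonneg_of_le (fun k => abs_nonneg _) (hcoef_abs_le hq0 hq1)
    (((summable_geometric_of_lt_one hq0.le hq1)).mul_left _)

/-- The key discrete biorthogonality: `∑ₖ h_k (q^{i+1-k};q)_∞ = δ_{i,0}`. -/
lemma key (hq0 : 0 < q) (hq1 : q < 1) (i : ℤ) :
    ∑' k : ℕ, hcoef q k * MyB q (i + 1 - k) = if i = 0 then 1 else 0 := by
  rcases lt_or_ge i 0 with hi | hi
  · rw [if_neg (by omega)]
    have : ∀ k : ℕ, hcoef q k * MyB q (i + 1 - k) = 0 := by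
      intro k
      rw [MyB_nonpos _ (by omega), mul_zero]
    simp [this]
  · set p := i.toNat with hp
    have hip : (p : ℤ) = i := Int.toNat_of_nonneg hi
    have hC : 0 < P q 0 := P_pos hq0 hq1 0
    have hvan : ∀ k ∉ range (p + 1), hcoef q k * MyB q (i + 1 - k) = 0 := by
      intro k hk
      have : p + 1 ≤ k := by simpa using hk
      rw [MyB_nonpos _ (by omega), mul_zero]
    rw [tsum_eq_sum hvan]
    have hterm : ∀ k ∈ range (p + 1),
        hcoef q k * MyB q (i + 1 - k)
          = (-1) ^ k * q ^ k.choose 2 * Gb q p k / Qp q p := by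
      intro k hk
      have hkp : k ≤ p := by
        have := Finset.mem_range.mp hk; omega
      have harg : i + 1 - k = ((p - k : ℕ) : ℤ) + 1 := by
        have : ((p - k : ℕ) : ℤ) = (p : ℤ) - (k : ℤ) := by
          push_cast [Nat.cast_sub hkp]
          ring
        omega
      rw [harg, MyB_nat]
      have e1 := Qp_P hq0 hq1 (p - k)
      have e2 := Gb_mul_Qp hq0 hq1 p k hkp
      have hQk : (0:ℝ) < Qp q k := Qp_pos hq0 hq1 k
      have hQpk : (0:ℝ) < Qp q (p - k) := Qp_pos hq0 hq1 (p - k)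
      have hQp : (0:ℝ) < Qp q p := Qp_pos hq0 hq1 p
      rw [hcoef, div_mul_eq_mul_div, div_eq_div_iff (by positivity) hQp.ne']
      linear_combination ((-1 : ℝ) ^ k * q ^ k.choose 2) *
        (Gb q p k * Qp q k * e1 - P q (p - k) * e2)
    rw [Finset.sum_congr rfl hterm, ← Finset.sum_div]
    rcases Nat.eq_zero_or_pos p with h0 | h0
    · rw [if_pos (by omega)]
      rw [show (∑ k ∈ range (p + 1), (-1 : ℝ) ^ k * q ^ k.choose 2 * Gb q p k) = S q p from rfl]
      rw [h0]
      have : S q 0 = 1 := by simp [S, Gb]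
      rw [this, show Qp q 0 = 1 from by simp [Qp], div_one]
    · rw [if_neg (by omega)]
      rw [show (∑ k ∈ range (p + 1), (-1 : ℝ) ^ k * q ^ k.choose 2 * Gb q p k) = S q p from rfl]
      rw [S_eq_zero p h0, zero_div]

end Stmt7Aux

set_option maxHeartbeats 1000000 in
/-- The sequence `x ↦ (q^{1-n} x²; q)_∞`, `n = 0,1,2,...` is complete in `L¹` with respect to
the Jackson q-measure on `(0,1)`. -/
theorem stmt7 (q : ℝ) (hq0 : 0 < q) (hq1 : q < 1) (y : ℝ → ℝ)
    (hy : Summable (fun m : ℕ => |y (q ^ m)| * q ^ m))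
    (hsum : ∀ n : ℕ,
      Summable (fun m : ℕ => y (q ^ m) * qPochInf (q ^ (1 - n : ℤ) * (q ^ m) ^ 2) q * q ^ m))
    (hvanish : ∀ n : ℕ,
      qIntegral01 q (fun x => y x * qPochInf (q ^ (1 - n : ℤ) * x ^ 2) q) = 0) :
    ∀ m : ℕ, y (q ^ m) = 0 := by
  classical
  open Stmt7Aux in
  intro m₀
  have hqne : q ≠ 0 := ne_of_gt hq0
  set c : ℕ → ℝ := fun m => y (q ^ m) * q ^ m with hc
  have hcabs : Summable fun m : ℕ => |c m| := by
    refine hy.congr fun m => ?_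
    rw [hc]
    rw [abs_mul, abs_of_pos (pow_pos hq0 m)]
  -- rewrite the vanishing hypothesis in terms of MyB
  have hEq : ∀ n : ℕ, ∑' m : ℕ, c m * MyB q (2 * m + 1 - n) = 0 := by
    intro n
    have h0 := hvanish n
    rw [qIntegral01] at h0
    have h1q : (1 : ℝ) - q ≠ 0 := by intro h; linarith [h]
    have h2 : ∑' m : ℕ,
        (y (q ^ m) * qPochInf (q ^ (1 - n : ℤ) * (q ^ m) ^ 2) q) * q ^ m = 0 := by
      rcases mul_eq_zero.mp h0 with h | h
      · exact absurd h h1q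
      · exact h
    rw [← h2]
    refine tsum_congr fun m => ?_
    have harg : q ^ (1 - n : ℤ) * (q ^ m) ^ 2 = q ^ ((2 * m + 1 - n : ℤ)) := by
      rw [← pow_mul, ← zpow_natCast q (m * 2), ← zpow_add₀ hqne]
      congr 1
      push_cast
      ring
    rw [harg, qPoch_eq_MyB hq0 hq1 (2 * m + 1 - n)]
    ring
  -- the double sum
  set F : ℕ × ℕ → ℝ :=
    fun km => hcoef q km.1 * (c km.2 * MyB q (2 * km.2 + 1 - (2 * m₀ + km.1))) with hF
  have hFsum : Summable F := by
    have hbnd : Summable fun km : ℕ × ℕ => |hcoef q km.1| * |c km.2| :=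
      (hcoef_summable hq0 hq1).mul_of_nonneg hcabs (fun _ => abs_nonneg _)
        (fun _ => abs_nonneg _)
    refine hbnd.of_norm_bounded fun km => ?_
    rw [hF]
    simp only [Real.norm_eq_abs, abs_mul]
    have hB0 := MyB_nonneg hq0 hq1 (2 * km.2 + 1 - (2 * m₀ + km.1))
    have hB1 := MyB_le_one hq0 hq1 (2 * km.2 + 1 - (2 * m₀ + km.1))
    have hBabs : |MyB q (2 * km.2 + 1 - (2 * m₀ + km.1))| ≤ 1 := by
      rw [abs_of_nonneg hB0]; exact hB1
    exact mul_le_mul_of_nonneg_left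
      (mul_le_of_le_one_right (abs_nonneg _) hBabs) (abs_nonneg _)
  -- first evaluation: sum over k first
  have hL : ∑' km : ℕ × ℕ, F km = 0 := by
    rw [Summable.tsum_prod hFsum]
    have : ∀ k : ℕ, ∑' m : ℕ, F (k, m) = 0 := by
      intro k
      have : ∑' m : ℕ, F (k, m)
          = hcoef q k * ∑' m : ℕ, c m * MyB q (2 * m + 1 - (2 * m₀ + k : ℕ)) := by
        rw [← tsum_mul_left]
        refine tsum_congr fun m => ?_
        rw [hF]
        push_cast
        ring_nf
      rw [this, hEq (2 * m₀ + k), mul_zero]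
    simp [this]
  -- second evaluation: sum over m first
  have hR : ∑' km : ℕ × ℕ, F km = c m₀ := by
    rw [Summable.tsum_prod hFsum]
    have hco : ∑' (k : ℕ) (m : ℕ), F (k, m) = ∑' (m : ℕ) (k : ℕ), F (k, m) :=
      (Summable.tsum_comm (f := fun k m => F (k, m)) hFsum).symm
    rw [hco]
    have hinner : ∀ m : ℕ, ∑' k : ℕ, F (k, m)
        = c m * (if (2 * m - 2 * m₀ : ℤ) = 0 then 1 else 0) := by
      intro m
      have h1 : ∑' k : ℕ, F (k, m)
          = c m * ∑' k : ℕ, hcoef q k * MyB q ((2 * m - 2 * m₀ : ℤ) + 1 - k) := by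
        rw [← tsum_mul_left]
        refine tsum_congr fun k => ?_
        rw [hF]
        have : (2 * (m : ℤ) + 1 - (2 * (m₀ : ℤ) + (k : ℤ))) = (2 * m - 2 * m₀ : ℤ) + 1 - k := by
          push_cast
          ring
        simp only []
        rw [this]
        ring
      rw [h1, key hq0 hq1 (2 * m - 2 * m₀ : ℤ)]
    rw [tsum_congr hinner]
    rw [tsum_eq_single m₀ (fun m hm => by
      rw [if_neg (by omega), mul_zero])]
    rw [if_pos (by ring), mul_one]
  have hc0 : c m₀ = 0 := by rw [← hR, hL]
  have := mul_eq_zero.mp hc0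
  rcases this with h | h
  · exact h
  · exact absurd h (pow_ne_zero m₀ hqne)
end

section
/- For 0 < α < ν, the n-th positive zero of the Bessel function J_α is strictly less than the n-th positive zero of J_ν: j_{n,α} < j_{n,ν} for all n ≥ 1. -/
open Real Filter Topology

/-- The classical Bessel function of the first kind of order `ν`. -/
noncomputable def besselJ (ν x : ℝ) : ℝ :=
  ∑' n : ℕ, (-1 : ℝ) ^ n / (n.factorial * Real.Gamma (ν + n + 1)) * (x / 2) ^ (ν + 2 * (n : ℝ))

namespace Stmt13Aux

noncomputable def S (c : ℕ → ℝ) (t : ℝ) : ℝ := ∑' n, c n * t ^ n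

noncomputable def dcoef (c : ℕ → ℝ) (n : ℕ) : ℝ := ((n : ℝ) + 1) * c (n + 1)

def Good (c : ℕ → ℝ) : Prop := ∀ r : ℝ, 0 < r → Summable fun n => |c n| * r ^ n

lemma Good.summable_abs {c : ℕ → ℝ} (hc : Good c) (t : ℝ) :
    Summable fun n => |c n * t ^ n| := by
  refine Summable.of_nonneg_of_le (fun n => abs_nonneg _)
    (fun n => ?_) (hc (|t| + 1) (by positivity))
  rw [abs_mul, abs_pow]
  exact mul_le_mul_of_nonneg_left (pow_le_pow_left₀ (abs_nonneg t)
    (by linarith) n) (abs_nonneg _)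

lemma Good.summable {c : ℕ → ℝ} (hc : Good c) (t : ℝ) :
    Summable fun n => c n * t ^ n := (hc.summable_abs t).of_abs

lemma Good.dcoef_good {c : ℕ → ℝ} (hc : Good c) : Good (dcoef c) := by
  intro r hr
  have h2r := hc (2 * r) (by positivity)
  have h2r' : Summable fun n => (1 / r) * (|c (n + 1)| * (2 * r) ^ (n + 1)) :=
    ((h2r.comp_injective (add_left_injective 1)).mul_left _)
  refine Summable.of_nonneg_of_le (fun n => by positivity) (fun n => ?_) h2r'
  have h1 : |dcoef c n| = ((n : ℝ) + 1) * |c (n + 1)| := by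
    rw [Stmt13Aux.dcoef, abs_mul, abs_of_nonneg (by positivity)]
  rw [h1]
  have h2 : ((n : ℝ) + 1) ≤ 2 ^ (n + 1) := by
    have hn : (n : ℝ) < 2 ^ n := by exact_mod_cast Nat.lt_two_pow_self (n := n)
    have h1n : (1 : ℝ) ≤ 2 ^ n := one_le_pow₀ one_le_two
    rw [pow_succ]
    nlinarith
  have : (1 / r) * (|c (n + 1)| * (2 * r) ^ (n + 1)) =
      (2 : ℝ) ^ (n + 1) * |c (n + 1)| * r ^ n := by
    field_simp [mul_pow]
    ring
  rw [this]
  calc ((n : ℝ) + 1) * |c (n + 1)| * r ^ n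
      ≤ (2 : ℝ) ^ (n + 1) * |c (n + 1)| * r ^ n := by
        apply mul_le_mul_of_nonneg_right _ (by positivity)
        exact mul_le_mul_of_nonneg_right h2 (abs_nonneg _)
    _ = _ := rfl

lemma Good.hasDerivAt {c : ℕ → ℝ} (hc : Good c) (t : ℝ) :
    HasDerivAt (S c) (S (dcoef c) t) t := by
  set R : ℝ := |t| + 1 with hR
  have htR : t ∈ Set.Ioo (-R) R := by
    constructor <;> [nlinarith [abs_nonneg t, neg_abs_le t]; nlinarith [le_abs_self t]]
  set u : ℕ → ℝ := fun n => (n : ℝ) * |c n| * R ^ (n - 1) with hu_def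
  have hu : Summable u := by
    rw [← summable_nat_add_iff 1]
    refine (hc.dcoef_good R (by positivity)).congr fun m => ?_
    simp only [hu_def, Stmt13Aux.dcoef, abs_mul, Nat.add_sub_cancel]
    push_cast
    rw [abs_of_nonneg (by positivity : (0:ℝ) ≤ (m:ℝ)+1)]
  have hbound : ∀ (n : ℕ) (y : ℝ), y ∈ Set.Ioo (-R) R →
      ‖c n * ((n : ℝ) * y ^ (n - 1))‖ ≤ u n := by
    intro n y hy
    have hyR : |y| ≤ R := by
      rcases hy with ⟨h1, h2⟩
      rw [abs_le]; constructor <;> linarith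
    rw [Real.norm_eq_abs, abs_mul, abs_mul, abs_pow, Nat.abs_cast, hu_def]
    have : |y| ^ (n - 1) ≤ R ^ (n - 1) :=
      pow_le_pow_left₀ (abs_nonneg _) hyR _
    show |c n| * ((n : ℝ) * |y| ^ (n - 1)) ≤ (n : ℝ) * |c n| * R ^ (n - 1)
    calc |c n| * ((n : ℝ) * |y| ^ (n - 1)) ≤ |c n| * ((n : ℝ) * R ^ (n - 1)) := by gcongr
      _ = (n : ℝ) * |c n| * R ^ (n - 1) := by ring
  have key : HasDerivAt (fun z => ∑' n, c n * z ^ n)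
      (∑' n, c n * ((n : ℝ) * t ^ (n - 1))) t := by
    exact hasDerivAt_tsum_of_isPreconnected hu isOpen_Ioo
      (convex_Ioo _ _).isPreconnected
      (fun n y _ => (hasDerivAt_pow n y).const_mul (c n)) hbound htR
      (hc.summable t) htR
  have hsum : Summable fun n => c n * ((n : ℝ) * t ^ (n - 1)) :=
    Summable.of_norm (Summable.of_nonneg_of_le (fun n => norm_nonneg _)
      (fun n => hbound n t htR) hu)
  have heq : (∑' n, c n * ((n : ℝ) * t ^ (n - 1))) = S (dcoef c) t := by
    rw [Summable.tsum_eq_zero_add hsum]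
    simp only [Nat.cast_zero, zero_mul, mul_zero, zero_add]
    show _ = ∑' n, dcoef c n * t ^ n
    refine tsum_congr fun m => ?_
    simp only [Stmt13Aux.dcoef, Nat.add_sub_cancel]
    push_cast
    ring
  rw [← heq]
  exact key

lemma Good.continuous {c : ℕ → ℝ} (hc : Good c) : Continuous (S c) := by
  have : Differentiable ℝ (S c) := fun t => (hc.hasDerivAt t).differentiableAt
  exact this.continuous

noncomputable def a (ν : ℝ) (n : ℕ) : ℝ :=
  (-1) ^ n / (n.factorial * Real.Gamma (ν + n + 1))

lemma gamma_pos {ν : ℝ} (hν : 0 < ν) (n : ℕ) : 0 < Real.Gamma (ν + n + 1) :=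
  Real.Gamma_pos_of_pos (by positivity)

lemma gamma_ge {ν : ℝ} (hν : 0 < ν) (n : ℕ) :
    (n.factorial : ℝ) * Real.Gamma (ν + 1) ≤ Real.Gamma (ν + n + 1) := by
  induction n with
  | zero => simp
  | succ m ih =>
    have h1 : Real.Gamma (ν + (m + 1 : ℕ) + 1) = (ν + m + 1) * Real.Gamma (ν + m + 1) := by
      have : ν + ((m : ℝ) + 1) + 1 = (ν + m + 1) + 1 := by ring
      push_cast
      rw [this, Real.Gamma_add_one (by positivity)]
    rw [h1]
    have h2 : ((m + 1).factorial : ℝ) = ((m : ℝ) + 1) * m.factorial := by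
      push_cast [Nat.factorial_succ]; ring
    rw [h2]
    have h3 : ((m : ℝ) + 1) ≤ ν + m + 1 := by linarith
    nlinarith [gamma_pos hν m, (Nat.cast_pos.mpr (Nat.factorial_pos m) : (0:ℝ) < m.factorial),
      Real.Gamma_pos_of_pos (by linarith : (0:ℝ) < ν + 1)]

lemma abs_a_le {ν : ℝ} (hν : 0 < ν) (n : ℕ) :
    |a ν n| ≤ (1 / Real.Gamma (ν + 1)) * (1 / n.factorial) := by
  have hg := gamma_pos hν n
  have hge := gamma_ge hν n
  have hf : (0:ℝ) < n.factorial := Nat.cast_pos.mpr (Nat.factorial_pos n)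
  have hf1 : (1:ℝ) ≤ n.factorial := Nat.one_le_cast.mpr (Nat.factorial_pos n)
  have hG1 : (0:ℝ) < Real.Gamma (ν + 1) := Real.Gamma_pos_of_pos (by linarith)
  have habs : |a ν n| = 1 / (n.factorial * Real.Gamma (ν + n + 1)) := by
    rw [a, abs_div, abs_pow, abs_neg, abs_one, one_pow,
      abs_of_pos (by positivity : (0:ℝ) < (n.factorial : ℝ) * Real.Gamma (ν + n + 1))]
  have h : Real.Gamma (ν+1) * n.factorial ≤ (n.factorial:ℝ) * Real.Gamma (ν + n + 1) := by
    nlinarith [hge, hf1, hG1, hg, hf]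
  have hrw : (1 / Real.Gamma (ν+1)) * (1 / (n.factorial:ℝ)) =
      1 / (Real.Gamma (ν+1) * n.factorial) := by
    rw [div_mul_div_comm, one_mul]
  rw [habs, hrw]
  exact one_div_le_one_div_of_le (by positivity) h
  
lemma good_a {ν : ℝ} (hν : 0 < ν) : Good (a ν) := by
  intro r hr
  refine Summable.of_nonneg_of_le (fun n => by positivity) (fun n => ?_)
    (((Real.summable_pow_div_factorial r).mul_left (1 / Real.Gamma (ν + 1))))
  calc |a ν n| * r ^ n ≤ ((1 / Real.Gamma (ν + 1)) * (1 / n.factorial)) * r ^ n :=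
        mul_le_mul_of_nonneg_right (abs_a_le hν n) (by positivity)
    _ = 1 / Real.Gamma (ν + 1) * (r ^ n / n.factorial) := by ring

lemma rec_a {ν : ℝ} (hν : 0 < ν) (n : ℕ) :
    ((n : ℝ) + 1) * (ν + n + 1) * a ν (n + 1) + a ν n = 0 := by
  have hg := gamma_pos hν n
  have hf : (0:ℝ) < n.factorial := Nat.cast_pos.mpr (Nat.factorial_pos n)
  have hgs : Real.Gamma (ν + (n + 1 : ℕ) + 1) = (ν + n + 1) * Real.Gamma (ν + n + 1) := by
    have : ν + ((n : ℝ) + 1) + 1 = (ν + n + 1) + 1 := by ring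
    push_cast
    rw [this, Real.Gamma_add_one (by positivity)]
  have hfs : ((n + 1).factorial : ℝ) = ((n : ℝ) + 1) * n.factorial := by
    push_cast [Nat.factorial_succ]; ring
  rw [a, a, hgs, hfs, pow_succ]
  have h1 : ν + (n:ℝ) + 1 > 0 := by positivity
  field_simp
  ring

noncomputable def f (ν : ℝ) : ℝ → ℝ := S (a ν)
noncomputable def f1 (ν : ℝ) : ℝ → ℝ := S (dcoef (a ν))
noncomputable def f2 (ν : ℝ) : ℝ → ℝ := S (dcoef (dcoef (a ν)))

set_option maxHeartbeats 1000000 in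
lemma ode_f {ν : ℝ} (hν : 0 < ν) (t : ℝ) :
    t * f2 ν t + ((ν + 1) * f1 ν t + f ν t) = 0 := by
  have ha := good_a hν
  have hd := ha.dcoef_good
  have hdd := hd.dcoef_good
  -- second part: (ν+1) f1 + f
  have hsum1 : Summable fun n => ((ν+1) * dcoef (a ν) n + a ν n) * t ^ n := by
    refine Summable.congr (((hd.summable t).mul_left (ν+1)).add (ha.summable t)) fun n => by ring
  have h2 : (ν + 1) * f1 ν t + f ν t = ∑' n, ((ν+1) * dcoef (a ν) n + a ν n) * t ^ n := by
    rw [f1, f, S, S, ← tsum_mul_left, ← Summable.tsum_add ((hd.summable t).mul_left (ν+1)) (ha.summable t)]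
    exact tsum_congr fun n => by ring
  have h3 : (ν + 1) * f1 ν t + f ν t =
      ∑' n, ((ν+1) * dcoef (a ν) (n+1) + a ν (n+1)) * t ^ (n+1) := by
    rw [h2, Summable.tsum_eq_zero_add hsum1]
    have hc0 : ((ν+1) * dcoef (a ν) 0 + a ν 0) * t ^ 0 = 0 := by
      have h0 := rec_a hν 0
      simp only [Stmt13Aux.dcoef, pow_zero, mul_one]
      push_cast at h0 ⊢
      linear_combination h0
    rw [hc0, zero_add]
  have h1 : t * f2 ν t = ∑' n, dcoef (dcoef (a ν)) n * t ^ (n+1) := by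
    rw [f2, S, ← tsum_mul_left]
    exact tsum_congr fun n => by ring
  rw [h1, h3]
  have hsA : Summable fun n => dcoef (dcoef (a ν)) n * t ^ (n+1) :=
    ((hdd.summable t).mul_left t).congr fun n => by ring
  have hsB : Summable fun n => ((ν+1) * dcoef (a ν) (n+1) + a ν (n+1)) * t ^ (n+1) :=
    (summable_nat_add_iff 1).mpr hsum1
  rw [← Summable.tsum_add hsA hsB]
  refine (tsum_congr fun n => ?_).trans tsum_zero
  have hrec := rec_a hν (n+1)
  simp only [Stmt13Aux.dcoef]
  push_cast at hrec ⊢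
  linear_combination t ^ (n+1) * hrec
  
noncomputable def J (ν : ℝ) (x : ℝ) : ℝ := (x/2) ^ ν * f ν (x^2/4)

noncomputable def J1 (ν : ℝ) (x : ℝ) : ℝ :=
  ν/x * J ν x + (x/2) * (x/2) ^ ν * f1 ν (x^2/4)

lemma besselJ_eq {ν x : ℝ} (hx : 0 < x) : besselJ ν x = J ν x := by
  have hc : (0:ℝ) < x/2 := by linarith
  rw [besselJ, J, f, S, ← tsum_mul_left]
  refine tsum_congr fun n => ?_
  have e1 : (x/2) ^ (ν + 2*(n:ℝ)) = (x/2) ^ ν * (x^2/4) ^ n := by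
    rw [Real.rpow_add hc]
    congr 1
    rw [show (2*(n:ℝ)) = ((2*n : ℕ):ℝ) by push_cast; ring, Real.rpow_natCast, pow_mul]
    congr 1
    rw [div_pow]
    norm_num
  rw [e1, a]
  ring

lemma hasDerivAt_pow_nu {ν x : ℝ} (hx : 0 < x) :
    HasDerivAt (fun y => (y/2) ^ ν) (ν/x * (x/2) ^ ν) x := by
  have hc : (0:ℝ) < x/2 := by linarith
  have h := Real.hasDerivAt_rpow_const (x := x/2) (p := ν) (Or.inl hc.ne')
  have hdiv : HasDerivAt (fun y : ℝ => y/2) (1/2) x := by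
    simpa using (hasDerivAt_id x).div_const 2
  have := h.comp x hdiv
  refine this.congr_deriv ?_
  rw [Real.rpow_sub_one hc.ne']
  field_simp

lemma hasDerivAt_t {x : ℝ} : HasDerivAt (fun y : ℝ => y^2/4) (x/2) x := by
  have := (hasDerivAt_pow 2 x).div_const 4
  refine this.congr_deriv ?_
  ring

lemma hasDerivAt_J {ν x : ℝ} (hν : 0 < ν) (hx : 0 < x) :
    HasDerivAt (J ν) (J1 ν x) x := by
  have hf : HasDerivAt (fun y => f ν (y^2/4)) (f1 ν (x^2/4) * (x/2)) x :=
    ((good_a hν).hasDerivAt (x^2/4)).comp x hasDerivAt_t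
  have := (hasDerivAt_pow_nu (ν := ν) hx).mul hf
  refine this.congr_deriv ?_
  rw [J1, J]
  ring

lemma hasDerivAt_J1 {ν x : ℝ} (hν : 0 < ν) (hx : 0 < x) :
    HasDerivAt (J1 ν) ((ν^2/x^2 - 1) * J ν x - 1/x * J1 ν x) x := by
  have hf : HasDerivAt (fun y => f ν (y^2/4)) (f1 ν (x^2/4) * (x/2)) x :=
    ((good_a hν).hasDerivAt (x^2/4)).comp x hasDerivAt_t
  have hf1 : HasDerivAt (fun y => f1 ν (y^2/4)) (f2 ν (x^2/4) * (x/2)) x :=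
    (((good_a hν).dcoef_good).hasDerivAt (x^2/4)).comp x hasDerivAt_t
  have hinv : HasDerivAt (fun y : ℝ => ν/y) (-(ν/x^2)) x := by
    have := (hasDerivAt_const x ν).div (hasDerivAt_id x) hx.ne'
    refine this.congr_deriv ?_
    simp only [id]
    field_simp
    ring
  have hhalf : HasDerivAt (fun y : ℝ => y/2) (1/2) x := by
    simpa using (hasDerivAt_id x).div_const 2
  have hJx : HasDerivAt (J ν) (J1 ν x) x := hasDerivAt_J hν hx
  have hA : HasDerivAt (fun y => ν/y * J ν y)
      (-(ν/x^2) * J ν x + ν/x * J1 ν x) x := hinv.mul hJx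
  have hB : HasDerivAt (fun y => (y/2) * (y/2) ^ ν * f1 ν (y^2/4))
      (((1/2) * (x/2) ^ ν + (x/2) * (ν/x * (x/2) ^ ν)) * f1 ν (x^2/4)
        + (x/2) * (x/2) ^ ν * (f2 ν (x^2/4) * (x/2))) x :=
    ((hhalf.mul (hasDerivAt_pow_nu hx)).mul hf1)
  have htot := hA.add hB
  have : J1 ν = fun y => ν/y * J ν y + (y/2) * (y/2) ^ ν * f1 ν (y^2/4) := rfl
  rw [this]
  refine htot.congr_deriv ?_
  have hx' : x ≠ 0 := hx.ne'
  have hF2 : f2 ν (x^2/4) = (-(ν+1) * f1 ν (x^2/4) - f ν (x^2/4)) / (x^2/4) := by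
    rw [eq_div_iff (by positivity : (x:ℝ)^2/4 ≠ 0)]
    linear_combination ode_f hν (x^2/4)
  simp only [J1, J]
  rw [hF2]
  field_simp
  ring

noncomputable def Wf (α ν : ℝ) (x : ℝ) : ℝ :=
  x * (J1 ν x * J α x - J ν x * J1 α x)

lemma hasDerivAt_W {α ν x : ℝ} (hα : 0 < α) (hν : 0 < ν) (hx : 0 < x) :
    HasDerivAt (Wf α ν) ((ν^2 - α^2)/x * (J ν x * J α x)) x := by
  have h := (hasDerivAt_id x).mul
    (((hasDerivAt_J1 hν hx).mul (hasDerivAt_J hα hx)).sub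
      ((hasDerivAt_J hν hx).mul (hasDerivAt_J1 hα hx)))
  refine h.congr_deriv ?_
  have hx' : x ≠ 0 := hx.ne'
  simp only [id, Pi.mul_apply, Pi.sub_apply]
  field_simp
  ring

lemma W_expand {α ν x : ℝ} (hx : 0 < x) :
    Wf α ν x = (x/2) ^ (ν+α) *
      ((ν - α) * (f ν (x^2/4) * f α (x^2/4)) +
        (x^2/2) * (f1 ν (x^2/4) * f α (x^2/4) - f ν (x^2/4) * f1 α (x^2/4))) := by
  have hc : (0:ℝ) < x/2 := by linarith
  have hx' : x ≠ 0 := hx.ne'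
  rw [Wf, J1, J1, J, J, Real.rpow_add hc]
  field_simp
  ring

lemma W_tendsto {α ν : ℝ} (hα : 0 < α) (hν : 0 < ν) :
    Tendsto (Wf α ν) (𝓝[>] (0:ℝ)) (𝓝 0) := by
  have hfν : Continuous (f ν) := (good_a hν).continuous
  have hfα : Continuous (f α) := (good_a hα).continuous
  have hf1ν : Continuous (f1 ν) := ((good_a hν).dcoef_good).continuous
  have hf1α : Continuous (f1 α) := ((good_a hα).dcoef_good).continuous
  have hq : Continuous fun x : ℝ => x^2/4 := by continuity
  have hbr : Continuous (fun x : ℝ =>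
      (ν - α) * (f ν (x^2/4) * f α (x^2/4)) +
        (x^2/2) * (f1 ν (x^2/4) * f α (x^2/4) - f ν (x^2/4) * f1 α (x^2/4))) :=
    (continuous_const.mul ((hfν.comp hq).mul (hfα.comp hq))).add
      (((continuous_pow 2).div_const 2).mul
        (((hf1ν.comp hq).mul (hfα.comp hq)).sub ((hfν.comp hq).mul (hf1α.comp hq))))
  have h1 : Tendsto (fun x : ℝ => (x/2) ^ (ν+α)) (𝓝[>] (0:ℝ)) (𝓝 0) := by
    have hrc : ContinuousAt (fun y : ℝ => y ^ (ν+α)) 0 :=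
      Real.continuousAt_rpow_const 0 (ν+α) (Or.inr (by positivity))
    have hdiv : Tendsto (fun x : ℝ => x/2) (𝓝 (0:ℝ)) (𝓝 0) := by
      simpa using (continuous_id.div_const 2).tendsto (0:ℝ)
    have h := hrc.tendsto.comp hdiv
    rw [Real.zero_rpow (by positivity : (0:ℝ) < ν + α).ne'] at h
    exact h.mono_left nhdsWithin_le_nhds
  have h2 := (hbr.tendsto _).mono_left (nhdsWithin_le_nhds (s := Set.Ioi (0:ℝ)) (a := (0:ℝ)))
  have hmul := h1.mul h2
  rw [zero_mul] at hmul
  refine hmul.congr' ?_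
  filter_upwards [self_mem_nhdsWithin] with x hx
  exact (W_expand hx).symm

lemma right_deriv_nonneg {g : ℝ → ℝ} {g' A B : ℝ} (hAB : A < B)
    (hd : HasDerivAt g g' A) (h0 : g A = 0)
    (hpos : ∀ x, A < x → x < B → 0 < g x) : 0 ≤ g' := by
  have hs := hasDerivAt_iff_tendsto_slope.mp hd
  have hs' : Tendsto (slope g A) (𝓝[>] A) (𝓝 g') :=
    hs.mono_left (nhdsWithin_mono A fun x hx => ne_of_gt hx)
  refine ge_of_tendsto hs' ?_
  filter_upwards [Ioo_mem_nhdsGT hAB] with x hx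
  rcases hx with ⟨h1, h2⟩
  rw [slope_def_field, h0, sub_zero]
  exact le_of_lt (div_pos (hpos x h1 h2) (by linarith))

lemma left_deriv_nonpos {g : ℝ → ℝ} {g' A B : ℝ} (hAB : A < B)
    (hd : HasDerivAt g g' B) (h0 : g B = 0)
    (hpos : ∀ x, A < x → x < B → 0 < g x) : g' ≤ 0 := by
  have hs := hasDerivAt_iff_tendsto_slope.mp hd
  have hs' : Tendsto (slope g B) (𝓝[<] B) (𝓝 g') :=
    hs.mono_left (nhdsWithin_mono B fun x hx => ne_of_lt hx)
  refine le_of_tendsto hs' ?_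
  filter_upwards [Ioo_mem_nhdsLT hAB] with x hx
  rcases hx with ⟨h1, h2⟩
  rw [slope_def_field, h0, sub_zero]
  exact le_of_lt (div_neg_of_pos_of_neg (hpos x h1 h2) (by linarith))

lemma val_nonneg_left {g : ℝ → ℝ} {A B : ℝ} (hAB : A < B)
    (hc : ContinuousAt g A) (hpos : ∀ x, A < x → x < B → 0 < g x) : 0 ≤ g A := by
  refine ge_of_tendsto (hc.tendsto.mono_left (nhdsWithin_le_nhds (s := Set.Ioi A))) ?_
  filter_upwards [Ioo_mem_nhdsGT hAB] with x hx
  exact (hpos x hx.1 hx.2).le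

lemma val_nonneg_right {g : ℝ → ℝ} {A B : ℝ} (hAB : A < B)
    (hc : ContinuousAt g B) (hpos : ∀ x, A < x → x < B → 0 < g x) : 0 ≤ g B := by
  refine ge_of_tendsto (hc.tendsto.mono_left (nhdsWithin_le_nhds (s := Set.Iio B))) ?_
  filter_upwards [Ioo_mem_nhdsLT hAB] with x hx
  exact (hpos x hx.1 hx.2).le

lemma pos_of_no_zero {g : ℝ → ℝ} {A B : ℝ}
    (hg : ∀ x ∈ Set.Ioo A B, ContinuousAt g x)
    (hne : ∀ x ∈ Set.Ioo A B, g x ≠ 0) {m : ℝ} (hm : m ∈ Set.Ioo A B)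
    (hgm : 0 < g m) : ∀ x ∈ Set.Ioo A B, 0 < g x := by
  intro x hx
  rcases lt_trichotomy (g x) 0 with h | h | h
  · exfalso
    have hsub : Set.uIcc x m ⊆ Set.Ioo A B :=
      (Set.ordConnected_Ioo).uIcc_subset hx hm
    have hcont : ContinuousOn g (Set.uIcc x m) := fun y hy =>
      (hg y (hsub hy)).continuousWithinAt
    have hiv := intermediate_value_uIcc hcont
    have h0 : (0:ℝ) ∈ Set.uIcc (g x) (g m) := Set.mem_uIcc.mpr (Or.inl ⟨h.le, hgm.le⟩)
    obtain ⟨c, hc, hc0⟩ := hiv h0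
    exact hne c (hsub hc) hc0
  · exact absurd h (hne x hx)
  · exact h

lemma exists_sign {g : ℝ → ℝ} {A B : ℝ} (hAB : A < B)
    (hg : ∀ x ∈ Set.Ioo A B, ContinuousAt g x)
    (hne : ∀ x ∈ Set.Ioo A B, g x ≠ 0) :
    ∃ s : ℝ, (s = 1 ∨ s = -1) ∧ ∀ x ∈ Set.Ioo A B, 0 < s * g x := by
  have hm : (A+B)/2 ∈ Set.Ioo A B := ⟨by linarith, by linarith⟩
  rcases lt_trichotomy (g ((A+B)/2)) 0 with h | h | h
  · refine ⟨-1, Or.inr rfl, ?_⟩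
    have := pos_of_no_zero (g := fun x => -g x)
      (fun x hx => (hg x hx).neg) (fun x hx => neg_ne_zero.mpr (hne x hx)) hm
      (by simpa using h)
    intro x hx
    simpa [neg_mul, one_mul] using this x hx
  · exact absurd h (hne _ hm)
  · refine ⟨1, Or.inl rfl, fun x hx => ?_⟩
    rw [one_mul]
    exact pos_of_no_zero hg hne hm h x hx

lemma sturm {α ν : ℝ} (hα : 0 < α) (hαν : α < ν) {A B : ℝ} (hA : 0 ≤ A) (hAB : A < B)
    (hνA : 0 < A → J ν A = 0) (hνB : J ν B = 0)
    (hν_ne : ∀ x, A < x → x < B → J ν x ≠ 0) :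
    ∃ z, A < z ∧ z < B ∧ J α z = 0 := by
  have hν : 0 < ν := hα.trans hαν
  by_contra hcon
  push_neg at hcon
  have hα_ne : ∀ x, A < x → x < B → J α x ≠ 0 := fun x h1 h2 h0 => hcon x h1 h2 h0
  have hxpos : ∀ x ∈ Set.Ioo A B, 0 < x := fun x hx => lt_of_le_of_lt hA hx.1
  have hcα : ∀ x ∈ Set.Ioo A B, ContinuousAt (J α) x :=
    fun x hx => (hasDerivAt_J hα (hxpos x hx)).continuousAt
  have hcν : ∀ x ∈ Set.Ioo A B, ContinuousAt (J ν) x :=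
    fun x hx => (hasDerivAt_J hν (hxpos x hx)).continuousAt
  obtain ⟨σ, hσ, hσpos⟩ := exists_sign hAB hcα (fun x hx => hα_ne x hx.1 hx.2)
  obtain ⟨τ, hτ, hτpos⟩ := exists_sign hAB hcν (fun x hx => hν_ne x hx.1 hx.2)
  have hσ1 : σ * σ = 1 := by rcases hσ with h | h <;> rw [h] <;> norm_num
  have hτ1 : τ * τ = 1 := by rcases hτ with h | h <;> rw [h] <;> norm_num
  set V : ℝ → ℝ := fun x => σ * τ * Wf α ν x with hV
  -- V is strictly monotone on [p,q] ⊆ [A,B] with p > 0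
  have hmono : ∀ p q : ℝ, A ≤ p → p < q → q ≤ B → 0 < p → StrictMonoOn V (Set.Icc p q) := by
    intro p q hp hpq hqB hppos
    have hder : ∀ x ∈ Set.Ioo p q, HasDerivAt V
        (σ * τ * ((ν^2 - α^2)/x * (J ν x * J α x))) x := by
      intro x hx
      exact (hasDerivAt_W hα hν (lt_trans hppos hx.1)).const_mul (σ * τ)
    refine strictMonoOn_of_deriv_pos (convex_Icc p q) ?_ ?_
    · intro x hx
      have hx0 : 0 < x := lt_of_lt_of_le hppos hx.1
      exact ((hasDerivAt_W hα hν hx0).const_mul (σ * τ)).continuousAt.continuousWithinAt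
    · intro x hx
      rw [interior_Icc] at hx
      rw [(hder x hx).deriv]
      have hxAB : x ∈ Set.Ioo A B := ⟨lt_of_le_of_lt hp hx.1, lt_of_lt_of_le hx.2 hqB⟩
      have h1 : 0 < (τ * J ν x) * (σ * J α x) :=
        mul_pos (hτpos x hxAB) (hσpos x hxAB)
      have h2 : 0 < (ν^2 - α^2)/x := div_pos (by nlinarith) (hxpos x hxAB)
      calc (0:ℝ) < (ν^2 - α^2)/x * ((τ * J ν x) * (σ * J α x)) := mul_pos h2 h1
        _ = σ * τ * ((ν^2 - α^2)/x * (J ν x * J α x)) := by ring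
  -- boundary value at B
  have hVB : V B ≤ 0 := by
    have hB0 : 0 < B := lt_of_le_of_lt hA hAB
    have hJ1B : τ * J1 ν B ≤ 0 := by
      have hd : HasDerivAt (fun x => τ * J ν x) (τ * J1 ν B) B :=
        (hasDerivAt_J hν hB0).const_mul τ
      exact left_deriv_nonpos hAB hd (by rw [hνB, mul_zero])
        (fun x h1 h2 => by simpa using hτpos x ⟨h1, h2⟩)
    have hJαB : 0 ≤ σ * J α B := by
      have hc : ContinuousAt (fun x => σ * J α x) B :=
        ((hasDerivAt_J hα hB0).continuousAt).const_smul σ |>.congr ?_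
      · exact val_nonneg_right (g := fun x => σ * J α x) hAB hc
          (fun x h1 h2 => by simpa using hσpos x ⟨h1, h2⟩)
      · exact Filter.EventuallyEq.of_eq rfl
    have : V B = B * ((τ * J1 ν B) * (σ * J α B)) := by
      rw [hV]
      simp only [Wf, hνB]
      ring
    rw [this]
    exact mul_nonpos_of_nonneg_of_nonpos hB0.le (mul_nonpos_of_nonpos_of_nonneg hJ1B hJαB)
  rcases eq_or_lt_of_le hA with hA0 | hApos
  · -- A = 0 : use the limit of V at 0⁺
    have hVlim : Tendsto V (𝓝[>] (0:ℝ)) (𝓝 0) := by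
      have := (W_tendsto hα hν).const_mul (σ * τ)
      simpa using this
    have hVp : V (B/2) < V B := by
      have := hmono (B/2) B (by linarith [hAB, hA0]) (by linarith [hAB, hA0]) le_rfl
        (by linarith [hAB, hA0])
      exact this (Set.mem_Icc.mpr ⟨le_rfl, by linarith [hAB, hA0]⟩)
        (Set.mem_Icc.mpr ⟨by linarith [hAB, hA0], le_rfl⟩) (by linarith [hAB, hA0])
    have hVp0 : 0 ≤ V (B/2) := by
      refine le_of_tendsto hVlim ?_
      filter_upwards [Ioo_mem_nhdsGT (show (0:ℝ) < B/2 by linarith [hAB, hA0])] with x hx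
      have hm := hmono x (B/2) (by linarith [hx.1, hA0]) hx.2 (by linarith [hAB, hA0]) hx.1
      exact (hm (Set.mem_Icc.mpr ⟨le_rfl, hx.2.le⟩)
        (Set.mem_Icc.mpr ⟨hx.2.le, le_rfl⟩) hx.2).le
    linarith
  · -- A > 0
    have hVA : 0 ≤ V A := by
      have hJ1A : 0 ≤ τ * J1 ν A := by
        have hd : HasDerivAt (fun x => τ * J ν x) (τ * J1 ν A) A :=
          (hasDerivAt_J hν hApos).const_mul τ
        exact right_deriv_nonneg hAB hd (by rw [hνA hApos, mul_zero])
          (fun x h1 h2 => by simpa using hτpos x ⟨h1, h2⟩)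
      have hJαA : 0 ≤ σ * J α A := by
        have hc : ContinuousAt (fun x => σ * J α x) A :=
          ((hasDerivAt_J hα hApos).continuousAt).const_smul σ |>.congr
            (Filter.EventuallyEq.of_eq rfl)
        exact val_nonneg_left (g := fun x => σ * J α x) hAB hc
          (fun x h1 h2 => by simpa using hσpos x ⟨h1, h2⟩)
      have : V A = A * ((τ * J1 ν A) * (σ * J α A)) := by
        rw [hV]
        simp only [Wf, hνA hApos]
        ring
      rw [this]
      positivity
    have : V A < V B :=
      hmono A B le_rfl hAB le_rfl hApos (Set.mem_Icc.mpr ⟨le_rfl, hAB.le⟩)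
        (Set.mem_Icc.mpr ⟨hAB.le, le_rfl⟩) hAB
    linarith

end Stmt13Aux


/-- For `0 < α < ν`, the n-th positive zero of `J_α` is strictly smaller than the n-th
positive zero of `J_ν`. -/
theorem stmt13 (α ν : ℝ) (hα : 0 < α) (hαν : α < ν)
    (jα jν : ℕ → ℝ)
    (hjα_mono : StrictMono jα) (hjα_pos : ∀ n, 0 < jα n)
    (hjα_zero : ∀ n, besselJ α (jα n) = 0)
    (hjα_all : ∀ x : ℝ, 0 < x → besselJ α x = 0 → ∃ n, jα n = x)
    (hjν_mono : StrictMono jν) (hjν_pos : ∀ n, 0 < jν n)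
    (hjν_zero : ∀ n, besselJ ν (jν n) = 0)
    (hjν_all : ∀ x : ℝ, 0 < x → besselJ ν x = 0 → ∃ n, jν n = x) :
    ∀ n : ℕ, jα n < jν n := by
  have hν : 0 < ν := hα.trans hαν
  have hJν_zero : ∀ n, Stmt13Aux.J ν (jν n) = 0 := fun n =>
    (Stmt13Aux.besselJ_eq (hjν_pos n)).symm.trans (hjν_zero n)
  have hJα_all : ∀ x : ℝ, 0 < x → Stmt13Aux.J α x = 0 → ∃ n, jα n = x := fun x hx h0 =>
    hjα_all x hx ((Stmt13Aux.besselJ_eq hx).trans h0)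
  have hJν_all : ∀ x : ℝ, 0 < x → Stmt13Aux.J ν x = 0 → ∃ n, jν n = x := fun x hx h0 =>
    hjν_all x hx ((Stmt13Aux.besselJ_eq hx).trans h0)
  have h0 : ∃ z, 0 < z ∧ z < jν 0 ∧ Stmt13Aux.J α z = 0 := by
    refine Stmt13Aux.sturm hα hαν le_rfl (hjν_pos 0)
      (fun h => absurd h (lt_irrefl 0)) (hJν_zero 0) ?_
    intro x h1 h2 hz
    obtain ⟨m, hm⟩ := hJν_all x h1 hz
    rw [← hm] at h2
    exact absurd (hjν_mono.lt_iff_lt.mp h2) (Nat.not_lt_zero m)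
  have hstep : ∀ k : ℕ, ∃ z, jν k < z ∧ z < jν (k+1) ∧ Stmt13Aux.J α z = 0 := by
    intro k
    refine Stmt13Aux.sturm hα hαν (hjν_pos k).le (hjν_mono (Nat.lt_succ_self k))
      (fun _ => hJν_zero k) (hJν_zero (k+1)) ?_
    intro x h1 h2 hz
    have hx0 : 0 < x := lt_trans (hjν_pos k) h1
    obtain ⟨m, hm⟩ := hJν_all x hx0 hz
    rw [← hm] at h1 h2
    have hk : k < m := hjν_mono.lt_iff_lt.mp h1
    have hk2 : m < k + 1 := hjν_mono.lt_iff_lt.mp h2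
    omega
  obtain ⟨z0, hz0a, hz0b, hz0c⟩ := h0
  choose zs hzs1 hzs2 hzs3 using hstep
  set z : ℕ → ℝ := fun k => Nat.casesOn k z0 zs with hz
  have hz_lt : ∀ k, z k < jν k := by
    intro k
    cases k with
    | zero => exact hz0b
    | succ m => exact hzs2 m
  have hz_pos : ∀ k, 0 < z k := by
    intro k
    cases k with
    | zero => exact hz0a
    | succ m => exact lt_trans (hjν_pos m) (hzs1 m)
  have hz_zero : ∀ k, Stmt13Aux.J α (z k) = 0 := by
    intro k
    cases k with
    | zero => exact hz0c
    | succ m => exact hzs3 m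
  have hz_mono : StrictMono z := by
    refine strictMono_nat_of_lt_succ fun k => ?_
    exact lt_trans (hz_lt k) (hzs1 k)
  have hex : ∀ k, ∃ n, jα n = z k := fun k => hJα_all (z k) (hz_pos k) (hz_zero k)
  choose ms hms using hex
  have hms_mono : StrictMono ms := by
    intro i j hij
    have : jα (ms i) < jα (ms j) := by
      rw [hms, hms]
      exact hz_mono hij
    exact hjα_mono.lt_iff_lt.mp this
  intro n
  calc jα n ≤ jα (ms n) := hjα_mono.monotone (hms_mono.le_apply)
    _ = z n := hms n
    _ < jν n := hz_lt n
end
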